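/- Let (θ₁,θ₂) ⊆ (0,π) or (θ₁,θ₂) ⊆ (π,2π), and let (λ, u) be a C¹ eigenvalue branch on (θ₁,θ₂) with u(θ,·) not identically zero for each θ. Then either λ is monotone on (θ₁,θ₂), or there exists θ* ∈ (θ₁,θ₂) such that Im⟨∂ₓu(θ*,a), u(θ*,a)⟩ = 0. -/

import Mathlib

open Set Matrix

noncomputable section

/-- `u` (with derivatives `u'`, `u''` on `[a,b]`) is a `(λ,θ)`-eigenfunction:
`-u'' + Vu = λu` on `[a,b]` with `θ`-periodic boundary conditions. -/
def IsEig (n : ℕ) (a b : ℝ) (V : ℝ → Matrix (Fin n) (Fin n) ℝ) (lam θ : ℝ)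
    (u u' u'' : ℝ → Fin n → ℂ) : Prop :=
  (∀ x ∈ Icc a b, HasDerivWithinAt u (u' x) (Icc a b) x) ∧
  (∀ x ∈ Icc a b, HasDerivWithinAt u' (u'' x) (Icc a b) x) ∧
  (∀ x ∈ Icc a b, -u'' x + ((V x).map Complex.ofReal).mulVec (u x) = (lam : ℂ) • u x) ∧
  u b = Complex.exp (θ * Complex.I) • u a ∧
  u' b = Complex.exp (θ * Complex.I) • u' a

/-- The inner product `⟨v,w⟩ = Σ_j v_j conj(w_j)` on `ℂ^n`. -/
def cinner (n : ℕ) (v w : Fin n → ℂ) : ℂ := ∑ j, v j * (starRingEnd ℂ) (w j)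

/-- `(lam, u)` (with the indicated partial derivatives) is a C¹ eigenvalue branch on
`(θ₁,θ₂)`: `lam` is differentiable with derivative `lam'`, for each `θ` the function
`u(θ,·)` is a `(lam(θ),θ)`-eigenfunction with `∂ₓu = ux`, `∂ₓ∂ₓu = uxx`, the maps `u`
and `ux` are differentiable in `θ` with derivatives `uθ`, `uθx`, and `uθ`, `uθx` are
jointly continuous on `(θ₁,θ₂) × [a,b]`. -/
def IsBranch (n : ℕ) (a b : ℝ) (V : ℝ → Matrix (Fin n) (Fin n) ℝ) (θ₁ θ₂ : ℝ)
    (lam lam' : ℝ → ℝ) (u ux uxx uθ uθx : ℝ → ℝ → Fin n → ℂ) : Prop :=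
  (∀ θ ∈ Ioo θ₁ θ₂, HasDerivWithinAt lam (lam' θ) (Ioo θ₁ θ₂) θ) ∧
  (∀ θ ∈ Ioo θ₁ θ₂, IsEig n a b V (lam θ) θ (u θ) (ux θ) (uxx θ)) ∧
  (∀ θ ∈ Ioo θ₁ θ₂, ∀ x ∈ Icc a b,
      HasDerivWithinAt (fun t => u t x) (uθ θ x) (Ioo θ₁ θ₂) θ) ∧
  (∀ θ ∈ Ioo θ₁ θ₂, ∀ x ∈ Icc a b,
      HasDerivWithinAt (fun t => ux t x) (uθx θ x) (Ioo θ₁ θ₂) θ) ∧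
  ContinuousOn (fun p : ℝ × ℝ => uθ p.1 p.2) (Ioo θ₁ θ₂ ×ˢ Icc a b) ∧
  ContinuousOn (fun p : ℝ × ℝ => uθx p.1 p.2) (Ioo θ₁ θ₂ ×ˢ Icc a b)


lemma cinner_smul_left (n : ℕ) (c : ℂ) (v w : Fin n → ℂ) :
    cinner n (c • v) w = c * cinner n v w := by
  simp [cinner, Finset.mul_sum, mul_assoc]

lemma cinner_smul_right (n : ℕ) (c : ℂ) (v w : Fin n → ℂ) :
    cinner n v (c • w) = (starRingEnd ℂ) c * cinner n v w := by
  simp [cinner, Finset.mul_sum]; ring_nf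
  exact Finset.sum_congr rfl fun j _ => by ring

lemma cinner_sub_right (n : ℕ) (v w₁ w₂ : Fin n → ℂ) :
    cinner n v (w₁ - w₂) = cinner n v w₁ - cinner n v w₂ := by
  simp [cinner, mul_sub, Finset.sum_sub_distrib]

lemma cinner_sub_left (n : ℕ) (v₁ v₂ w : Fin n → ℂ) :
    cinner n (v₁ - v₂) w = cinner n v₁ w - cinner n v₂ w := by
  simp [cinner, sub_mul, Finset.sum_sub_distrib]

lemma cinner_conj_symm (n : ℕ) (v w : Fin n → ℂ) :
    (starRingEnd ℂ) (cinner n w v) = cinner n v w := by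
  simp [cinner, map_sum, mul_comm]

lemma cinner_self (n : ℕ) (v : Fin n → ℂ) :
    cinner n v v = ((∑ j, Complex.normSq (v j) : ℝ) : ℂ) := by
  simp [cinner, Complex.mul_conj]

lemma norm_cinner_le (n : ℕ) (v w : Fin n → ℂ) :
    ‖cinner n v w‖ ≤ n * (‖v‖ * ‖w‖) := by
  calc ‖cinner n v w‖ ≤ ∑ j : Fin n, ‖v j * (starRingEnd ℂ) (w j)‖ := norm_sum_le _ _
    _ ≤ ∑ _j : Fin n, ‖v‖ * ‖w‖ := by
        refine Finset.sum_le_sum fun j _ => ?_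
        rw [norm_mul, RCLike.norm_conj]
        exact mul_le_mul (norm_le_pi_norm v j) (norm_le_pi_norm w j) (norm_nonneg _) (norm_nonneg _)
    _ = n * (‖v‖ * ‖w‖) := by simp [Finset.sum_const, nsmul_eq_mul]

lemma cinner_mulVec_symm (n : ℕ) (M : Matrix (Fin n) (Fin n) ℝ) (hM : Mᵀ = M)
    (v w : Fin n → ℂ) :
    cinner n ((M.map Complex.ofReal).mulVec v) w
      = cinner n v ((M.map Complex.ofReal).mulVec w) := by
  have hsym : ∀ j k, M k j = M j k := fun j k => by
    conv_lhs => rw [← hM]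
    simp [Matrix.transpose_apply]
  simp only [cinner, Matrix.mulVec, dotProduct, Matrix.map_apply, map_sum,
    Finset.sum_mul, Finset.mul_sum]
  rw [Finset.sum_comm]
  refine Finset.sum_congr rfl fun j _ => Finset.sum_congr rfl fun k _ => ?_
  rw [_root_.map_mul, Complex.conj_ofReal, hsym j k]; ring

lemma hasDerivWithinAt_conj {g : ℝ → ℂ} {g' : ℂ} {s : Set ℝ} {x : ℝ}
    (h : HasDerivWithinAt g g' s x) :
    HasDerivWithinAt (fun y => (starRingEnd ℂ) (g y)) ((starRingEnd ℂ) g') s x := by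
  have := (Complex.conjCLE.toContinuousLinearMap.hasFDerivAt (x := g x)).comp_hasDerivWithinAt x h
  simp at this; exact this

lemma hasDerivWithinAt_cinner {n : ℕ} {f g : ℝ → Fin n → ℂ} {f' g' : Fin n → ℂ}
    {s : Set ℝ} {x : ℝ}
    (hf : HasDerivWithinAt f f' s x) (hg : HasDerivWithinAt g g' s x) :
    HasDerivWithinAt (fun y => cinner n (f y) (g y))
      (cinner n f' (g x) + cinner n (f x) g') s x := by
  have hfj := (hasDerivWithinAt_pi (𝕜 := ℝ)).mp hf
  have hgj := (hasDerivWithinAt_pi (𝕜 := ℝ)).mp hg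
  have : HasDerivWithinAt (fun y => ∑ j, f y j * (starRingEnd ℂ) (g y j))
      (∑ j, (f' j * (starRingEnd ℂ) (g x j) + f x j * (starRingEnd ℂ) (g' j))) s x :=
    HasDerivWithinAt.fun_sum fun j _ => (hfj j).mul (hasDerivWithinAt_conj (hgj j))
  simpa [cinner, Finset.sum_add_distrib] using this

lemma continuousOn_cinner {n : ℕ} {f g : ℝ → Fin n → ℂ} {s : Set ℝ}
    (hf : ContinuousOn f s) (hg : ContinuousOn g s) :
    ContinuousOn (fun y => cinner n (f y) (g y)) s := by
  unfold cinner
  refine continuousOn_finset_sum _ fun j _ => ?_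
  exact ((continuous_apply j).comp_continuousOn hf).mul
    (Complex.continuous_conj.comp_continuousOn ((continuous_apply j).comp_continuousOn hg))

lemma hasDerivWithinAt_mul_of_zero {f g : ℝ → ℂ} {f' : ℂ} {s : Set ℝ} {x : ℝ}
    (hf : HasDerivWithinAt f f' s x) (hf0 : f x = 0) (hg : ContinuousWithinAt g s x) :
    HasDerivWithinAt (fun y => f y * g y) (f' * g x) s x := by
  rw [hasDerivWithinAt_iff_tendsto_slope] at hf ⊢
  have hg' : Filter.Tendsto g (nhdsWithin x (s \ {x})) (nhds (g x)) :=
    hg.mono_left (nhdsWithin_mono x diff_subset)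
  refine (hf.mul hg').congr' ?_
  filter_upwards [eventually_mem_nhdsWithin] with y hy
  have hxy : y - x ≠ 0 := sub_ne_zero.mpr hy.2
  simp only [slope_def_module, hf0, mul_zero, sub_zero, smul_mul_assoc, zero_mul]

lemma key_identity (n : ℕ) (a b : ℝ) (hab : a < b)
    (V : ℝ → Matrix (Fin n) (Fin n) ℝ)
    (hVsymm : ∀ x ∈ Icc a b, (V x)ᵀ = V x)
    (θ₁ θ₂ : ℝ)
    (lam lam' : ℝ → ℝ) (u ux uxx uθ uθx : ℝ → ℝ → Fin n → ℂ)
    (hbranch : IsBranch n a b V θ₁ θ₂ lam lam' u ux uxx uθ uθx)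
    (t : ℝ) (ht : t ∈ Ioo θ₁ θ₂) :
    lam' t * (∫ x in a..b, ∑ j, Complex.normSq (u t x j))
      = 2 * (cinner n (ux t a) (u t a)).im := by
  obtain ⟨hlam, heig, huθ, huθx, hcuθ, hcuθx⟩ := hbranch
  have hmem_a : a ∈ Icc a b := ⟨le_refl a, hab.le⟩
  have hmem_b : b ∈ Icc a b := ⟨hab.le, le_refl b⟩
  -- continuity in x of u s, ux s
  have contu : ∀ s ∈ Ioo θ₁ θ₂, ContinuousOn (fun x => u s x) (Icc a b) :=
    fun s hs x hx => ((heig s hs).1 x hx).continuousWithinAt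
  -- uxx formula from the eigen-equation
  have huxx_eq : ∀ s ∈ Ioo θ₁ θ₂, ∀ x ∈ Icc a b,
      uxx s x = ((V x).map Complex.ofReal).mulVec (u s x) - (lam s : ℂ) • u s x := by
    intro s hs x hx
    have h := (heig s hs).2.2.1 x hx
    rw [neg_add_eq_sub, sub_eq_iff_eq_add] at h
    rw [h]; abel
  set Itg : ℝ → ℂ := fun s => ∫ x in a..b, cinner n (u t x) (u s x) with hItg
  set B : ℝ → ℂ := fun s => cinner n (ux t a) (u s a) - cinner n (u t a) (ux s a) with hB
  -- Green's identity
  have green : ∀ s ∈ Ioo θ₁ θ₂,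
      ((lam s : ℂ) - lam t) * Itg s
        = (Complex.exp ((↑t - ↑s) * Complex.I) - 1) * B s := by
    intro s hs
    set W : ℝ → ℂ := fun x => cinner n (ux t x) (u s x) - cinner n (u t x) (ux s x) with hW
    have hW' : ∀ x ∈ Icc a b, HasDerivWithinAt W
        (((lam s : ℂ) - lam t) * cinner n (u t x) (u s x)) (Icc a b) x := by
      intro x hx
      have h1 := hasDerivWithinAt_cinner ((heig t ht).2.1 x hx) ((heig s hs).1 x hx)
      have h2 := hasDerivWithinAt_cinner ((heig t ht).1 x hx) ((heig s hs).2.1 x hx)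
      have h := h1.sub h2
      refine h.congr_deriv ?_
      rw [huxx_eq t ht x hx, huxx_eq s hs x hx, cinner_sub_left, cinner_sub_right,
        cinner_mulVec_symm n (V x) (hVsymm x hx), cinner_smul_left, cinner_smul_right,
        Complex.conj_ofReal]
      ring
    have hcontW : ContinuousOn W (Icc a b) := fun x hx => (hW' x hx).continuousWithinAt
    have hW'cont : ContinuousOn (fun x => ((lam s : ℂ) - lam t) * cinner n (u t x) (u s x))
        (Icc a b) := continuousOn_const.mul (continuousOn_cinner (contu t ht) (contu s hs))
    have hint : IntervalIntegrable (fun x => ((lam s : ℂ) - lam t) * cinner n (u t x) (u s x))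
        MeasureTheory.volume a b := by
      apply ContinuousOn.intervalIntegrable
      rwa [uIcc_of_le hab.le]
    have hftc := intervalIntegral.integral_eq_sub_of_hasDeriv_right_of_le hab.le hcontW
      (fun x hx => (hW' x (Ioo_subset_Icc_self hx)).mono_of_mem_nhdsWithin
        (Icc_mem_nhdsGT_of_mem ⟨hx.1.le, hx.2⟩)) hint
    rw [intervalIntegral.integral_const_mul] at hftc
    rw [hftc]
    -- boundary computation
    have hconj : ∀ r : ℝ, (starRingEnd ℂ) (Complex.exp (↑r * Complex.I))
        = Complex.exp (-(↑r * Complex.I)) := by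
      intro r
      rw [← Complex.exp_conj]
      congr 1
      simp
    have hWb : W b = Complex.exp ((↑t - ↑s) * Complex.I) * W a := by
      simp only [hW]
      rw [(heig t ht).2.2.2.1, (heig s hs).2.2.2.1, (heig t ht).2.2.2.2, (heig s hs).2.2.2.2,
        cinner_smul_left, cinner_smul_right, cinner_smul_left, cinner_smul_right, hconj]
      rw [show Complex.exp (↑t * Complex.I) * (Complex.exp (-(↑s * Complex.I)) * cinner n (ux t a) (u s a)) = Complex.exp (↑t * Complex.I) * Complex.exp (-(↑s * Complex.I)) * cinner n (ux t a) (u s a) by ring,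
        show Complex.exp (↑t * Complex.I) * (Complex.exp (-(↑s * Complex.I)) * cinner n (u t a) (ux s a)) = Complex.exp (↑t * Complex.I) * Complex.exp (-(↑s * Complex.I)) * cinner n (u t a) (ux s a) by ring,
        ← Complex.exp_add]
      ring_nf
    rw [hWb, hW]
    ring
  -- continuity of Itg at t within Ioo θ₁ θ₂
  have hItgc : ContinuousWithinAt Itg (Ioo θ₁ θ₂) t := by
    obtain ⟨ε, hε, hball⟩ := Metric.isOpen_iff.mp isOpen_Ioo t ht
    set δ := ε / 2 with hδdef
    have hδ : 0 < δ := half_pos hε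
    have hIccsub : Icc (t - δ) (t + δ) ⊆ Ioo θ₁ θ₂ := by
      intro r hr
      apply hball
      rw [Metric.mem_ball, Real.dist_eq, abs_sub_lt_iff]
      constructor
      · have := hr.2; simp only [hδdef] at this ⊢; linarith
      · have := hr.1; simp only [hδdef] at this ⊢; linarith
    have htmem : t ∈ Icc (t - δ) (t + δ) := ⟨by linarith, by linarith⟩
    obtain ⟨M, hM⟩ := (isCompact_Icc.prod isCompact_Icc).exists_bound_of_continuousOn
      (hcuθ.mono (Set.prod_mono hIccsub subset_rfl))
    set M' := max M 0 with hM'def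
    obtain ⟨C, hC⟩ := isCompact_Icc.exists_bound_of_continuousOn (contu t ht)
    set C' := max C 0 with hC'def
    have hLip : ∀ s ∈ Icc (t - δ) (t + δ), ∀ x ∈ Icc a b,
        ‖u s x - u t x‖ ≤ M' * |s - t| := by
      intro s hs x hx
      have := Convex.norm_image_sub_le_of_norm_hasDerivWithin_le
        (f := fun r => u r x) (f' := fun r => uθ r x)
        (fun r hr => (huθ r (hIccsub hr) x hx).mono hIccsub)
        (fun r hr => le_trans (hM (r, x) ⟨hr, hx⟩) (le_max_left M 0))
        (convex_Icc _ _) htmem hs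
      simpa [Real.norm_eq_abs] using this
    have hbnd : ∀ s, s ∈ Ioo θ₁ θ₂ → s ∈ Icc (t - δ) (t + δ) →
        ‖Itg s - Itg t‖ ≤ (↑n * C' * M' * |b - a|) * |s - t| := by
      intro s hs hs'
      have hint1 : IntervalIntegrable (fun x => cinner n (u t x) (u s x))
          MeasureTheory.volume a b := by
        apply ContinuousOn.intervalIntegrable
        rw [uIcc_of_le hab.le]
        exact continuousOn_cinner (contu t ht) (contu s hs)
      have hint2 : IntervalIntegrable (fun x => cinner n (u t x) (u t x))
          MeasureTheory.volume a b := by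
        apply ContinuousOn.intervalIntegrable
        rw [uIcc_of_le hab.le]
        exact continuousOn_cinner (contu t ht) (contu t ht)
      have heq : Itg s - Itg t
          = ∫ x in a..b, cinner n (u t x) (u s x - u t x) := by
        rw [hItg]
        simp only
        rw [← intervalIntegral.integral_sub hint1 hint2]
        congr 1
        funext x
        rw [cinner_sub_right]
      rw [heq]
      have hb1 : ∀ x ∈ Set.uIoc a b,
          ‖cinner n (u t x) (u s x - u t x)‖ ≤ ↑n * (C' * (M' * |s - t|)) := by
        intro x hx
        have hx' : x ∈ Icc a b := by
          rw [uIoc_of_le hab.le] at hx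
          exact ⟨hx.1.le, hx.2⟩
        have h1 : ‖u t x‖ ≤ C' := le_trans (hC x hx') (le_max_left C 0)
        have h2 : ‖u s x - u t x‖ ≤ M' * |s - t| := hLip s hs' x hx'
        calc ‖cinner n (u t x) (u s x - u t x)‖
            ≤ ↑n * (‖u t x‖ * ‖u s x - u t x‖) := norm_cinner_le n _ _
          _ ≤ ↑n * (C' * (M' * |s - t|)) := by gcongr
      calc ‖∫ x in a..b, cinner n (u t x) (u s x - u t x)‖
          ≤ (↑n * (C' * (M' * |s - t|))) * |b - a| :=
            intervalIntegral.norm_integral_le_of_norm_le_const hb1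
        _ = (↑n * C' * M' * |b - a|) * |s - t| := by ring
    rw [ContinuousWithinAt]
    rw [← tendsto_sub_nhds_zero_iff]
    apply squeeze_zero_norm' (a := fun s => (↑n * C' * M' * |b - a|) * |s - t|)
    · have h1 : ∀ᶠ s in nhdsWithin t (Ioo θ₁ θ₂), s ∈ Ioo θ₁ θ₂ := eventually_mem_nhdsWithin
      have h2 : ∀ᶠ s in nhdsWithin t (Ioo θ₁ θ₂), s ∈ Icc (t - δ) (t + δ) := by
        apply Filter.Eventually.filter_mono nhdsWithin_le_nhds
        have := Metric.closedBall_mem_nhds t hδ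
        rw [Real.closedBall_eq_Icc] at this
        exact this
      filter_upwards [h1, h2] with s hs hs'
      exact hbnd s hs hs'
    · have htend : Filter.Tendsto (fun s : ℝ => |s - t|) (nhdsWithin t (Ioo θ₁ θ₂)) (nhds 0) := by
        have : Filter.Tendsto (fun s : ℝ => |s - t|) (nhds t) (nhds |t - t|) :=
          ((continuous_id.sub continuous_const).abs).tendsto t
        simpa using this.mono_left nhdsWithin_le_nhds
      simpa using htend.const_mul (↑n * C' * M' * |b - a|)
  -- derivative of the left side at t
  have hlamC : HasDerivWithinAt (fun s => ((lam s : ℂ) - lam t)) ((lam' t : ℂ))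
      (Ioo θ₁ θ₂) t := by
    have h := Complex.ofRealCLM.hasFDerivAt.comp_hasDerivWithinAt t (hlam t ht)
    simpa using (h.sub_const (lam t : ℂ))
  have hLd : HasDerivWithinAt (fun s => ((lam s : ℂ) - lam t) * Itg s)
      ((lam' t : ℂ) * Itg t) (Ioo θ₁ θ₂) t :=
    hasDerivWithinAt_mul_of_zero hlamC (by simp) hItgc
  -- derivative of the right side at t
  have hEd : HasDerivWithinAt (fun s : ℝ => Complex.exp ((↑t - ↑s) * Complex.I) - 1)
      (-Complex.I) (Ioo θ₁ θ₂) t := by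
    have h0 : HasDerivWithinAt (fun s : ℝ => ((s : ℂ))) 1 (Ioo θ₁ θ₂) t := by
      have := (Complex.ofRealCLM.hasFDerivAt.comp_hasDerivWithinAt t
        (hasDerivWithinAt_id t (Ioo θ₁ θ₂)))
      simp at this; exact this
    have h1 : HasDerivWithinAt (fun s : ℝ => ((t : ℂ) - (s : ℂ)) * Complex.I)
        (-Complex.I) (Ioo θ₁ θ₂) t := by
      simpa using ((h0.const_sub (t : ℂ)).mul_const Complex.I)
    have h2 := h1.cexp
    simp only [sub_self, zero_mul, Complex.exp_zero, one_mul] at h2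
    simpa using h2.sub_const 1
  have hBd : HasDerivWithinAt B
      (cinner n (ux t a) (uθ t a) - cinner n (u t a) (uθx t a)) (Ioo θ₁ θ₂) t := by
    have h1 := hasDerivWithinAt_cinner (hasDerivWithinAt_const t _ (ux t a)) (huθ t ht a hmem_a)
    have h2 := hasDerivWithinAt_cinner (hasDerivWithinAt_const t _ (u t a)) (huθx t ht a hmem_a)
    have h := h1.sub h2
    simp [cinner] at h ⊢; exact h
  have hRd : HasDerivWithinAt
      (fun s => (Complex.exp ((↑t - ↑s) * Complex.I) - 1) * B s)
      (-Complex.I * B t) (Ioo θ₁ θ₂) t := by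
    have h := hEd.mul hBd
    simp at h ⊢; exact h
  -- transfer derivative along the identity and use uniqueness
  have hLd' : HasDerivWithinAt (fun s => ((lam s : ℂ) - lam t) * Itg s)
      (-Complex.I * B t) (Ioo θ₁ θ₂) t :=
    hRd.congr (fun s hs => green s hs) (green t ht)
  have hu : UniqueDiffWithinAt ℝ (Ioo θ₁ θ₂) t := isOpen_Ioo.uniqueDiffWithinAt ht
  have hkey : (lam' t : ℂ) * Itg t = -Complex.I * B t :=
    (hLd.derivWithin hu).symm.trans (hLd'.derivWithin hu)
  -- rewrite both sides
  have hItgt : Itg t = ((∫ x in a..b, ∑ j, Complex.normSq (u t x j) : ℝ) : ℂ) := by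
    rw [hItg]
    simp only
    rw [show (fun x => cinner n (u t x) (u t x))
        = fun x => ((∑ j, Complex.normSq (u t x j) : ℝ) : ℂ) from
      funext fun x => cinner_self n (u t x)]
    exact intervalIntegral.integral_ofReal
  have hBt : -Complex.I * B t = ((2 * (cinner n (ux t a) (u t a)).im : ℝ) : ℂ) := by
    have : cinner n (u t a) (ux t a) = (starRingEnd ℂ) (cinner n (ux t a) (u t a)) :=
      (cinner_conj_symm n (u t a) (ux t a)).symm
    rw [hB]
    simp only
    rw [this, Complex.sub_conj]
    push_cast
    rw [show (-Complex.I) * (2 * ((cinner n (ux t a) (u t a)).im : ℂ) * Complex.I)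
        = -(Complex.I * Complex.I) * (2 * ((cinner n (ux t a) (u t a)).im : ℂ)) by ring,
      Complex.I_mul_I]
    ring
  rw [hItgt, hBt] at hkey
  have := hkey
  rw [show ((lam' t : ℂ)) * ((∫ x in a..b, ∑ j, Complex.normSq (u t x j) : ℝ) : ℂ)
      = ((lam' t * ∫ x in a..b, ∑ j, Complex.normSq (u t x j) : ℝ) : ℂ) by push_cast; ring] at this
  exact_mod_cast this

/-- if `(θ₁,θ₂) ⊆ (0,π)` or `(θ₁,θ₂) ⊆ (π,2π)` and `(lam, u)` is a C¹
eigenvalue branch on `(θ₁,θ₂)` with `u(θ,·)` not identically zero for each `θ`, then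
either `lam` is monotone on `(θ₁,θ₂)` or there is `θ* ∈ (θ₁,θ₂)` with
`Im ⟨∂ₓu(θ*,a), u(θ*,a)⟩ = 0`. -/
theorem monotone_or_im_inner_zero (n : ℕ) (hn : 1 ≤ n) (a b : ℝ) (hab : a < b)
    (V : ℝ → Matrix (Fin n) (Fin n) ℝ)
    (hVcont : ∀ i j, ContinuousOn (fun x => V x i j) (Icc a b))
    (hVsymm : ∀ x ∈ Icc a b, (V x)ᵀ = V x)
    (θ₁ θ₂ : ℝ) (h12 : θ₁ < θ₂)
    (hsub : Ioo θ₁ θ₂ ⊆ Ioo (0 : ℝ) Real.pi ∨ Ioo θ₁ θ₂ ⊆ Ioo Real.pi (2 * Real.pi))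
    (lam lam' : ℝ → ℝ) (u ux uxx uθ uθx : ℝ → ℝ → Fin n → ℂ)
    (hbranch : IsBranch n a b V θ₁ θ₂ lam lam' u ux uxx uθ uθx)
    (hne : ∀ θ ∈ Ioo θ₁ θ₂, ∃ x ∈ Icc a b, u θ x ≠ 0) :
    (MonotoneOn lam (Ioo θ₁ θ₂) ∨ AntitoneOn lam (Ioo θ₁ θ₂)) ∨
    ∃ θs ∈ Ioo θ₁ θ₂, (cinner n (ux θs a) (u θs a)).im = 0 := by
  by_cases hzero : ∃ θs ∈ Ioo θ₁ θ₂, (cinner n (ux θs a) (u θs a)).im = 0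
  · exact Or.inr hzero
  push_neg at hzero
  left
  obtain ⟨hlam, heig, huθ, huθx, hcuθ, hcuθx⟩ := hbranch
  have hmem_a : a ∈ Icc a b := ⟨le_refl a, hab.le⟩
  set φ : ℝ → ℝ := fun θ => (cinner n (ux θ a) (u θ a)).im with hφdef
  set J : ℝ → ℝ := fun θ => ∫ x in a..b, ∑ j, Complex.normSq (u θ x j) with hJdef
  have hkey : ∀ θ ∈ Ioo θ₁ θ₂, lam' θ * J θ = 2 * φ θ := fun θ hθ =>
    key_identity n a b hab V hVsymm θ₁ θ₂ lam lam' u ux uxx uθ uθx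
      ⟨hlam, heig, huθ, huθx, hcuθ, hcuθx⟩ θ hθ
  have hJnn : ∀ θ ∈ Ioo θ₁ θ₂, 0 ≤ J θ := fun θ hθ =>
    intervalIntegral.integral_nonneg hab.le
      (fun x _ => Finset.sum_nonneg fun j _ => Complex.normSq_nonneg _)
  have hJpos : ∀ θ ∈ Ioo θ₁ θ₂, 0 < J θ := by
    intro θ hθ
    rcases (hJnn θ hθ).lt_or_eq with h | h
    · exact h
    · exfalso
      apply hzero θ hθ
      have := hkey θ hθ
      rw [← h, mul_zero] at this
      linarith
  -- continuity of φ on the interval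
  have hφc : ContinuousOn φ (Ioo θ₁ θ₂) := by
    have h1 : ContinuousOn (fun θ => ux θ a) (Ioo θ₁ θ₂) :=
      fun θ hθ => (huθx θ hθ a hmem_a).continuousWithinAt
    have h2 : ContinuousOn (fun θ => u θ a) (Ioo θ₁ θ₂) :=
      fun θ hθ => (huθ θ hθ a hmem_a).continuousWithinAt
    exact Complex.continuous_im.comp_continuousOn (continuousOn_cinner h1 h2)
  have hlamc : ContinuousOn lam (Ioo θ₁ θ₂) :=
    fun θ hθ => (hlam θ hθ).continuousWithinAt
  have hd : ∀ θ ∈ Ioo θ₁ θ₂, HasDerivAt lam (lam' θ) θ :=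
    fun θ hθ => (hlam θ hθ).hasDerivAt (Ioo_mem_nhds hθ.1 hθ.2)
  -- φ has constant sign on the interval
  have hconst : (∀ θ ∈ Ioo θ₁ θ₂, 0 < φ θ) ∨ (∀ θ ∈ Ioo θ₁ θ₂, φ θ < 0) := by
    set θ₀ := (θ₁ + θ₂) / 2 with hθ₀def
    have hθ₀ : θ₀ ∈ Ioo θ₁ θ₂ := ⟨by simp only [hθ₀def]; linarith, by simp only [hθ₀def]; linarith⟩
    rcases (Ne.lt_or_gt (hzero θ₀ hθ₀)) with hneg | hpos
    · right
      intro θ hθ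
      by_contra hle
      push_neg at hle
      have hθpos : 0 < φ θ := lt_of_le_of_ne hle (Ne.symm (hzero θ hθ))
      rcases lt_trichotomy θ θ₀ with hlt | heq | hgt
      · have hsub : Icc θ θ₀ ⊆ Ioo θ₁ θ₂ :=
          fun x hx => ⟨lt_of_lt_of_le hθ.1 hx.1, lt_of_le_of_lt hx.2 hθ₀.2⟩
        obtain ⟨x, hx, hx0⟩ := intermediate_value_Icc' hlt.le (hφc.mono hsub)
          ⟨hneg.le, hθpos.le⟩
        exact hzero x (hsub hx) hx0
      · rw [heq] at hθpos; linarith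
      · have hsub : Icc θ₀ θ ⊆ Ioo θ₁ θ₂ :=
          fun x hx => ⟨lt_of_lt_of_le hθ₀.1 hx.1, lt_of_le_of_lt hx.2 hθ.2⟩
        obtain ⟨x, hx, hx0⟩ := intermediate_value_Icc hgt.le (hφc.mono hsub)
          ⟨hneg.le, hθpos.le⟩
        exact hzero x (hsub hx) hx0
    · left
      intro θ hθ
      by_contra hle
      push_neg at hle
      have hθneg : φ θ < 0 := lt_of_le_of_ne hle (hzero θ hθ)
      rcases lt_trichotomy θ θ₀ with hlt | heq | hgt
      · have hsub : Icc θ θ₀ ⊆ Ioo θ₁ θ₂ :=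
          fun x hx => ⟨lt_of_lt_of_le hθ.1 hx.1, lt_of_le_of_lt hx.2 hθ₀.2⟩
        obtain ⟨x, hx, hx0⟩ := intermediate_value_Icc hlt.le (hφc.mono hsub)
          ⟨hθneg.le, hpos.le⟩
        exact hzero x (hsub hx) hx0
      · rw [heq] at hθneg; linarith
      · have hsub : Icc θ₀ θ ⊆ Ioo θ₁ θ₂ :=
          fun x hx => ⟨lt_of_lt_of_le hθ₀.1 hx.1, lt_of_le_of_lt hx.2 hθ.2⟩
        obtain ⟨x, hx, hx0⟩ := intermediate_value_Icc' hgt.le (hφc.mono hsub)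
          ⟨hθneg.le, hpos.le⟩
        exact hzero x (hsub hx) hx0
  rcases hconst with hpos | hneg
  · left
    apply StrictMonoOn.monotoneOn
    apply strictMonoOn_of_deriv_pos (convex_Ioo θ₁ θ₂) hlamc
    intro x hx
    rw [interior_Ioo] at hx
    rw [(hd x hx).deriv]
    have h1 := hkey x hx
    have h2 := hJpos x hx
    have h3 := hpos x hx
    nlinarith
  · right
    apply StrictAntiOn.antitoneOn
    apply strictAntiOn_of_deriv_neg (convex_Ioo θ₁ θ₂) hlamc
    intro x hx
    rw [interior_Ioo] at hx
    rw [(hd x hx).deriv]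
    have h1 := hkey x hx
    have h2 := hJpos x hx
    have h3 := hneg x hx
    nlinarith
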